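/- Let $n=2m+1$ and $a_1,\ldots,a_n\in\{-1,1\}$ with $c_{2j}=(-1)^m$ for $j=1,\ldots,m$ and $4\mid c_{2j-1}$ for $j=1,\ldots,m$, where $c_k=\sum_{j=1}^{n-k}a_ja_{j+k}$. Then $a_{k+1}a_{n-k}=(-1)^{m+k}$ for $k=0,1,\ldots,n-1$. -/

import Mathlib

open Finset

theorem stmt5 (m n : ℕ) (hm : 1 ≤ m) (hn : n = 2 * m + 1) (a : ℕ → ℤ)
    (ha : ∀ j ∈ Icc 1 n, a j = 1 ∨ a j = -1)
    (c : ℕ → ℤ) (hc : ∀ k, c k = ∑ j ∈ Icc 1 (n - k), a j * a (j + k))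
    (heven : ∀ j, 1 ≤ j → j ≤ m → c (2 * j) = (-1 : ℤ) ^ m)
    (hodd : ∀ j, 1 ≤ j → j ≤ m → (4 : ℤ) ∣ c (2 * j - 1)) :
    ∀ k ≤ n - 1, a (k + 1) * a (n - k) = (-1 : ℤ) ^ (m + k) := by
  subst hn
  set n := 2*m+1 with hn
  obtain ⟨S, hSdef⟩ : ∃ S : ℕ → ℤ, ∀ t, S t = ∑ j ∈ Ioc 0 t, a j := ⟨_, fun _ => rfl⟩
  have hpt : ∀ x y : ℤ, (x = 1 ∨ x = -1) → (y = 1 ∨ y = -1) →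
      (4:ℤ) ∣ x * y - (x + y - 1) := by
    rintro x y (rfl|rfl) (rfl|rfl) <;> norm_num
  -- key congruence: c k ≡ S(n-k) + S n - S k - (n-k)  (mod 4)
  have hH : ∀ k, k ≤ n → (4:ℤ) ∣ c k - (S (n-k) + S n - S k - ((n:ℤ) - (k:ℤ))) := by
    intro k hk
    have hsh : ∑ j ∈ Ioc 0 (n - k), a (j + k) = S n - S k := by
      have hmap : (Ioc 0 (n-k)).map (addLeftEmbedding k) = Ioc k n := by
        rw [Finset.map_add_left_Ioc]
        congr 1 <;> omega
      have hcons := Finset.sum_Ioc_consecutive a (Nat.zero_le k) hk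
      have h2 : ∑ j ∈ Ioc k n, a j = ∑ j ∈ Ioc 0 (n-k), a (j + k) := by
        rw [← hmap, Finset.sum_map]
        refine Finset.sum_congr rfl fun j hj => ?_
        simp [addLeftEmbedding, add_comm]
      rw [hSdef, hSdef, ← hcons, ← h2]
      ring
    have hck : c k = ∑ j ∈ Ioc 0 (n - k), a j * a (j + k) := by
      rw [hc k, ← Finset.Icc_add_one_left_eq_Ioc, zero_add]
    have hkey : c k - (S (n-k) + S n - S k - ((n:ℤ) - (k:ℤ)))
        = ∑ j ∈ Ioc 0 (n-k), (a j * a (j+k) - (a j + a (j+k) - 1)) := by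
      rw [Finset.sum_sub_distrib, Finset.sum_sub_distrib, Finset.sum_add_distrib,
        Finset.sum_const, Nat.card_Ioc, hck, hsh, hSdef (n-k)]
      have : ((n - k : ℕ) : ℤ) = (n:ℤ) - (k:ℤ) := by
        have := Nat.cast_sub hk (R := ℤ); omega
      simp only [Nat.sub_zero, nsmul_eq_mul, mul_one, this]
      ring
    rw [hkey]
    refine Finset.dvd_sum fun j hj => ?_
    rw [Finset.mem_Ioc] at hj
    exact hpt _ _ (ha j (by rw [Finset.mem_Icc]; omega))
      (ha (j+k) (by rw [Finset.mem_Icc]; omega))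
  have hOdd' : ∀ t, 1 ≤ t → t ≤ 2*m → Odd t →
      (4:ℤ) ∣ S (n-t) + S n - S t - ((n:ℤ) - (t:ℤ)) := by
    rintro t h1 h2 ⟨j, hj⟩
    have hcj := hodd (j+1) (by omega) (by omega)
    have he : 2*(j+1) - 1 = t := by omega
    rw [he] at hcj
    have hHt := hH t (by omega)
    omega
  have hEven' : ∀ t, 1 ≤ t → t ≤ 2*m → Even t →
      (4:ℤ) ∣ S (n-t) + S n - S t - ((n:ℤ) - (t:ℤ)) - (-1:ℤ)^m := by
    intro t h1 h2 ht
    obtain ⟨j, hj⟩ := ht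
    have hcj := heven j (by omega) (by omega)
    have he : 2*j = t := by omega
    rw [he] at hcj
    have hHt := hH t (by omega)
    rcases Nat.even_or_odd m with hme | hmo
    · rw [Even.neg_one_pow hme] at hcj ⊢; omega
    · rw [Odd.neg_one_pow hmo] at hcj ⊢; omega
  have hpar : (2:ℤ) ∣ S n - (n:ℤ) := by
    have hs : S n - (n:ℤ) = ∑ j ∈ Ioc 0 n, (a j - 1) := by
      rw [hSdef, Finset.sum_sub_distrib, Finset.sum_const, Nat.card_Ioc]
      simp
    rw [hs]
    refine Finset.dvd_sum fun j hj => ?_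
    rw [Finset.mem_Ioc] at hj
    rcases ha j (by rw [Finset.mem_Icc]; omega) with h|h <;> simp [h]
  have hS0 : S 0 = 0 := by rw [hSdef]; simp
  -- final
  intro k hk
  have hk2 : k ≤ 2*m := by omega
  have ha1 : a (k+1) = 1 ∨ a (k+1) = -1 := ha _ (by rw [Finset.mem_Icc]; omega)
  have ha2 : a (n-k) = 1 ∨ a (n-k) = -1 := ha _ (by rw [Finset.mem_Icc]; omega)
  have hpt12 := hpt _ _ ha1 ha2
  have htel : a (k+1) + a (n-k) = (S (k+1) - S k) + (S (n-k) - S (n-(k+1))) := by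
    have e1 : S (k+1) = S k + a (k+1) := by
      rw [hSdef, hSdef, Finset.sum_Ioc_succ_top (Nat.zero_le k)]
    have e2 : S (n-k) = S (n-(k+1)) + a (n-k) := by
      have h : n - k = (n - (k+1)) + 1 := by omega
      rw [h, hSdef, hSdef, Finset.sum_Ioc_succ_top (Nat.zero_le _)]
    rw [e1, e2]; ring
  have hmain : (4:ℤ) ∣ (a (k+1) + a (n-k) - 1) - (-1:ℤ)^(m+k) := by
    rw [htel]
    rcases Nat.even_or_odd k with hke | hko
    · -- k even
      have hmk : (-1:ℤ)^(m+k) = (-1:ℤ)^m := by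
        rw [pow_add, Even.neg_one_pow hke, mul_one]
      rw [hmk]
      by_cases hk0 : k = 0
      · subst hk0
        have h1 := hOdd' 1 (by omega) (by omega) ⟨0, by omega⟩
        simp only [Nat.zero_add, Nat.sub_zero]
        rcases Nat.even_or_odd m with hme | hmo
        · rw [Even.neg_one_pow hme]
          obtain ⟨u, hu⟩ := hme
          push_cast at h1 ⊢; omega
        · rw [Odd.neg_one_pow hmo]
          obtain ⟨u, hu⟩ := hmo
          push_cast at h1 ⊢; omega
      · by_cases hk2m : k = 2*m
        · subst hk2m
          have h1 := hEven' (2*m) (by omega) (by omega) ⟨m, by omega⟩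
          rw [← hn]
          have hnn : n - n = 0 := by omega
          rw [hnn, hS0]
          have hnn2 : n - 2*m = 1 := by omega
          rw [hnn2] at h1 ⊢
          rcases Nat.even_or_odd m with hme | hmo
          · rw [Even.neg_one_pow hme] at h1 ⊢; push_cast at h1 ⊢; omega
          · rw [Odd.neg_one_pow hmo] at h1 ⊢; push_cast at h1 ⊢; omega
        · -- 2 ≤ k ≤ 2m-1, k even, k+1 odd ≤ 2m
          have h1 := hEven' k (by omega) (by omega) hke
          have h2 := hOdd' (k+1) (by omega) (by omega) (by
            obtain ⟨u, hu⟩ := hke; exact ⟨u, by omega⟩)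
          rcases Nat.even_or_odd m with hme | hmo
          · rw [Even.neg_one_pow hme] at h1 ⊢; push_cast at h1 h2 ⊢; omega
          · rw [Odd.neg_one_pow hmo] at h1 ⊢; push_cast at h1 h2 ⊢; omega
    · -- k odd: 1 ≤ k ≤ 2m-1, k+1 even ≤ 2m
      have hmk : (-1:ℤ)^(m+k) = -(-1:ℤ)^m := by
        rw [pow_add, Odd.neg_one_pow hko, mul_neg_one]
      rw [hmk]
      have hk1 : 1 ≤ k := by obtain ⟨u, hu⟩ := hko; omega
      have h1 := hOdd' k hk1 hk2 hko
      have h2 := hEven' (k+1) (by omega) (by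
        obtain ⟨u, hu⟩ := hko; omega) (by
        obtain ⟨u, hu⟩ := hko; exact ⟨u+1, by omega⟩)
      rcases Nat.even_or_odd m with hme | hmo
      · rw [Even.neg_one_pow hme] at h2 ⊢; push_cast at h1 h2 ⊢; omega
      · rw [Odd.neg_one_pow hmo] at h2 ⊢; push_cast at h1 h2 ⊢; omega
  have hEps : (-1:ℤ)^(m+k) = 1 ∨ (-1:ℤ)^(m+k) = -1 := by
    rcases Nat.even_or_odd (m+k) with h | h
    · left; exact Even.neg_one_pow h
    · right; exact Odd.neg_one_pow h
  rcases ha1 with h|h <;> rcases ha2 with h'|h' <;> rcases hEps with he|he <;>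
    rw [h, h'] at hpt12 hmain ⊢ <;> rw [he] at hmain ⊢ <;> omega
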